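/- The Gaussian integral over A_N = ℝ × ℤ/Nℤ: γ := ∫_{A_N} ⟨x,n⟩ d(x,n) = N^{-1/2} Σ_{n∈ℤ/Nℤ} ∫_ℝ e^{πi x²} e^{-πi n(n+N)/N} dx lies on the unit circle, assuming the oscillatory integral ∫_ℝ e^{πix²}dx is interpreted as e^{πi/4} (Fresnel) — concretely, |N^{-1/2} Σ_{n=0}^{N-1} e^{-πi n(n+N)/N}| = 1 when N is odd. -/

import Mathlib

open Complex

section aux
variable {N : ℕ} [NeZero N]

lemma conj_stdAddChar (x : ZMod N) :
    (starRingEnd ℂ) (ZMod.stdAddChar x) = ZMod.stdAddChar (-x) := by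
  have hx : ((x.val : ℤ) : ZMod N) = x := by push_cast; simp [ZMod.natCast_val, ZMod.intCast_zmod_cast]
  rw [← hx, ← Int.cast_neg, ZMod.stdAddChar_coe, ZMod.stdAddChar_coe, ← Complex.exp_conj]
  congr 1
  simp only [map_div₀, map_mul, map_ofNat, Complex.conj_I, Complex.conj_ofReal,
    map_intCast, map_natCast, Int.cast_neg]
  ring

lemma sum_stdAddChar_quad (m : ZMod N) (h2m : 2 * m = 1) :
    (∑ x : ZMod N, ZMod.stdAddChar (-(m * x ^ 2))) *
      (starRingEnd ℂ) (∑ x : ZMod N, ZMod.stdAddChar (-(m * x ^ 2))) = N := by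
  classical
  rw [map_sum, Finset.sum_mul_sum]
  simp_rw [conj_stdAddChar, neg_neg, ← AddChar.map_add_eq_mul]
  have key : ∀ x : ZMod N, ∑ y : ZMod N, ZMod.stdAddChar (-(m * x ^ 2) + m * y ^ 2)
      = ∑ d : ZMod N, ZMod.stdAddChar (m * d ^ 2) * ZMod.stdAddChar (x * d) := by
    intro x
    rw [← Equiv.sum_comp (Equiv.addLeft x)]
    refine Finset.sum_congr rfl fun d _ => ?_
    rw [← AddChar.map_add_eq_mul]
    congr 1
    have h : (Equiv.addLeft x) d = x + d := rfl
    rw [h]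
    have h2 : -(m * x ^ 2) + m * (x + d) ^ 2 = m * d ^ 2 + (2 * m) * (x * d) := by ring
    rw [h2, h2m, one_mul]
  simp_rw [key]
  rw [Finset.sum_comm]
  have step : ∀ y : ZMod N, ∑ x : ZMod N,
      ZMod.stdAddChar (m * y ^ 2) * ZMod.stdAddChar (x * y)
      = ZMod.stdAddChar (m * y ^ 2) * (if y = 0 then (N : ℂ) else 0) := by
    intro y
    rw [← Finset.mul_sum]
    congr 1
    simpa [ZMod.card] using AddChar.sum_mulShift y (ZMod.isPrimitive_stdAddChar N)
  simp_rw [step, mul_ite, mul_zero]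
  rw [Finset.sum_ite_eq' Finset.univ (0 : ZMod N)]
  simp
end aux

/-- for odd positive `N`, the normalized Gauss sum
`N^{-1/2} Σ_{n=0}^{N-1} exp(-πi n(n+N)/N)` has absolute value `1`. -/
theorem gauss_sum_unit_modulus (N : ℕ) (hN : 0 < N) (hodd : Odd N) :
    ‖((Real.sqrt N : ℝ) : ℂ)⁻¹ *
      ∑ n ∈ Finset.range N,
        Complex.exp (-(Real.pi : ℂ) * I * (n : ℂ) * ((n : ℂ) + (N : ℂ)) / (N : ℂ))‖ = 1 := by
  haveI : NeZero N := ⟨hN.ne'⟩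
  set m : ZMod N := (((N + 1) / 2 : ℕ) : ZMod N) with hm
  have h2m : 2 * m = 1 := by
    have hdvd : 2 * ((N + 1) / 2) = N + 1 := by
      obtain ⟨j, hj⟩ := hodd; omega
    rw [hm]
    calc (2 : ZMod N) * ((N + 1) / 2 : ℕ) = ((2 * ((N + 1) / 2) : ℕ) : ZMod N) := by push_cast; ring
    _ = ((N + 1 : ℕ) : ZMod N) := by rw [hdvd]
    _ = 1 := by push_cast; simp
  have hu : IsUnit (2 : ZMod N) := by
    rw [show ((2 : ZMod N)) = ((2 : ℕ) : ZMod N) by push_cast; ring,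
      ZMod.isUnit_iff_coprime]
    exact Nat.coprime_two_left.mpr hodd
  have hsum : ∑ n ∈ Finset.range N,
      Complex.exp (-(Real.pi : ℂ) * I * (n : ℂ) * ((n : ℂ) + (N : ℂ)) / (N : ℂ))
      = ∑ x : ZMod N, ZMod.stdAddChar (-(m * x ^ 2)) := by
    refine Finset.sum_bij (fun n _ => (n : ZMod N)) (fun n _ => Finset.mem_univ _)
      ?_ ?_ ?_
    · intro a ha b hb hab
      have := congrArg ZMod.val hab
      rwa [ZMod.val_cast_of_lt (Finset.mem_range.mp ha),
        ZMod.val_cast_of_lt (Finset.mem_range.mp hb)] at this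
    · intro x _
      exact ⟨x.val, Finset.mem_range.mpr (ZMod.val_lt x), by simp [ZMod.natCast_val, ZMod.cast_id]⟩
    · intro n hn
      have heven : 2 ∣ n * (n + N) := by
        rcases Nat.even_or_odd n with he | ho
        · exact Dvd.dvd.mul_right he.two_dvd _
        · exact Dvd.dvd.mul_left (ho.add_odd hodd).two_dvd _
      obtain ⟨k, hk⟩ := heven
      have hkC : (2 * k : ℂ) = (n : ℂ) * ((n : ℂ) + (N : ℂ)) := by
        have := congrArg (Nat.cast : ℕ → ℂ) hk
        push_cast at this
        linear_combination -this
      have harg : -(Real.pi : ℂ) * I * (n : ℂ) * ((n : ℂ) + (N : ℂ)) / (N : ℂ)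
          = 2 * (Real.pi : ℂ) * I * ((-(k : ℤ) : ℤ) : ℂ) / (N : ℂ) := by
        push_cast
        rw [div_eq_div_iff (by exact_mod_cast hN.ne') (by exact_mod_cast hN.ne')]
        linear_combination ((Real.pi : ℂ) * I * (N : ℂ)) * hkC
      have hzmod : (((-(k : ℤ)) : ℤ) : ZMod N) = -(m * (n : ZMod N) ^ 2) := by
        push_cast
        rw [neg_eq_iff_eq_neg, neg_neg]
        apply hu.mul_left_cancel
        calc (2 : ZMod N) * (k : ℕ) = ((2 * k : ℕ) : ZMod N) := by push_cast; ring
        _ = ((n * (n + N) : ℕ) : ZMod N) := by rw [hk]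
        _ = (n : ZMod N) ^ 2 := by push_cast; simp; ring
        _ = 2 * (m * (n : ZMod N) ^ 2) := by rw [← mul_assoc, h2m]; ring
      rw [harg, ← ZMod.stdAddChar_coe, hzmod]
  rw [hsum]
  set S := ∑ x : ZMod N, ZMod.stdAddChar (-(m * x ^ 2)) with hS
  have hSS : S * (starRingEnd ℂ) S = N := sum_stdAddChar_quad m h2m
  have habs : ‖S‖ = Real.sqrt N := by
    rw [Complex.mul_conj] at hSS
    have : Complex.normSq S = (N : ℝ) := by exact_mod_cast hSS
    rw [Complex.norm_def, this]
  rw [norm_mul, habs, norm_inv, Complex.norm_real,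
    Real.norm_of_nonneg (Real.sqrt_nonneg _),
    inv_mul_cancel₀ (Real.sqrt_ne_zero'.mpr (by exact_mod_cast hN))]
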